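/- With J as in the polar decomposition P-Q = JT (T strictly positive), one has PJP = PT ≥ 0 and QJQ = -QT ≤ 0; in particular s(Jy,y) ≥ 0 for y in K and s(Jz,z) ≤ 0 for z in L. -/

import Mathlib

open scoped RealInnerProductSpace

theorem stmt_12 {V : Type*} [NormedAddCommGroup V] [InnerProductSpace ℝ V] [CompleteSpace V]
    (K L : Submodule ℝ V) (hKc : IsClosed (K : Set V)) (hLc : IsClosed (L : Set V))
    (hsup : K ⊔ L = ⊤) (hinf : K ⊓ L = ⊥)
    (P Q : V →L[ℝ] V) (hPsa : IsSelfAdjoint P) (hQsa : IsSelfAdjoint Q)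
    (hPK : ∀ x, P x ∈ K) (hPfix : ∀ x ∈ K, P x = x)
    (hQL : ∀ x, Q x ∈ L) (hQfix : ∀ x ∈ L, Q x = x)
    (J T : V →L[ℝ] V) (hJsa : IsSelfAdjoint J) (hJ2 : J * J = 1)
    (hT : T.IsPositive) (hTinj : Function.Injective T)
    (hT2 : T * T = (P - Q) * (P - Q)) (hJT : P - Q = J * T)
    (hTP : T * P = P * T) (hTQ : T * Q = Q * T) (hTJ : T * J = J * T) :
    (P * J * P = P * T ∧ (P * J * P).IsPositive) ∧
    (Q * J * Q = -(Q * T) ∧ (-(Q * J * Q)).IsPositive) ∧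
    (∀ y ∈ K, 0 ≤ ⟪J y, y⟫) ∧ (∀ z ∈ L, ⟪J z, z⟫ ≤ 0) := by
  have hcancel : ∀ A B : V →L[ℝ] V, T * A = T * B → A = B := by
    intro A B h
    ext x
    apply hTinj
    have := ContinuousLinearMap.ext_iff.mp h x
    simpa using this
  have hPP : P * P = P := ContinuousLinearMap.ext fun x => hPfix _ (hPK x)
  have hQQ : Q * Q = Q := ContinuousLinearMap.ext fun x => hQfix _ (hQL x)
  have hJTPQ : J * T = P - Q := hJT.symm
  have hPJP : P * J * P = P * T := by
    apply hcancel
    have e1 : T * (P * J * P) = P * (J * T) * P := by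
      calc T * (P * J * P) = (T * P) * J * P := by noncomm_ring
        _ = (P * T) * J * P := by rw [hTP]
        _ = P * (T * J) * P := by noncomm_ring
        _ = P * (J * T) * P := by rw [hTJ]
    have e2 : T * (P * T) = P * (T * T) := by
      calc T * (P * T) = (T * P) * T := by noncomm_ring
        _ = (P * T) * T := by rw [hTP]
        _ = P * (T * T) := by noncomm_ring
    rw [e1, e2, hJTPQ, hT2]
    simp only [mul_sub, sub_mul, mul_assoc, hPP, hQQ]
    simp [hPP, hQQ, mul_sub, sub_mul, ← mul_assoc]
  have hQJQ : Q * J * Q = -(Q * T) := by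
    apply hcancel
    have e1 : T * (Q * J * Q) = Q * (J * T) * Q := by
      calc T * (Q * J * Q) = (T * Q) * J * Q := by noncomm_ring
        _ = (Q * T) * J * Q := by rw [hTQ]
        _ = Q * (T * J) * Q := by noncomm_ring
        _ = Q * (J * T) * Q := by rw [hTJ]
    have e2 : T * -(Q * T) = -(Q * (T * T)) := by
      calc T * -(Q * T) = -((T * Q) * T) := by noncomm_ring
        _ = -((Q * T) * T) := by rw [hTQ]
        _ = -(Q * (T * T)) := by noncomm_ring
    rw [e1, e2, hJTPQ, hT2]
    simp only [mul_sub, sub_mul, mul_assoc, hPP, hQQ]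
    simp [hPP, hQQ, mul_sub, sub_mul, ← mul_assoc]
  have hPTP : P * T * P = P * T := by
    rw [← hTP, mul_assoc, hPP]
  have hQTQ : Q * T * Q = Q * T := by
    rw [← hTQ, mul_assoc, hQQ]
  have hTsa : IsSelfAdjoint T := hT.isSelfAdjoint
  have hPTsa : IsSelfAdjoint (P * T) := by
    rw [IsSelfAdjoint, star_mul, hPsa.star_eq, hTsa.star_eq, hTP]
  have hQTsa : IsSelfAdjoint (Q * T) := by
    rw [IsSelfAdjoint, star_mul, hQsa.star_eq, hTsa.star_eq, hTQ]
  have hPTpos : (P * T).IsPositive := by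
    refine ⟨ContinuousLinearMap.isSelfAdjoint_iff_isSymmetric.mp hPTsa, fun x => ?_⟩
    have : (P * T) x = P (T (P x)) := by
      rw [← hPTP]; rfl
    rw [ContinuousLinearMap.reApplyInnerSelf, this]
    have hip : ⟪P (T (P x)), x⟫ = ⟪T (P x), P x⟫ := by
      rw [← ContinuousLinearMap.adjoint_inner_right P (T (P x)) x,
        hPsa.adjoint_eq]
    simp only [RCLike.re_to_real, hip]
    exact hT.inner_nonneg_left (P x)
  have hQTpos : (Q * T).IsPositive := by
    refine ⟨ContinuousLinearMap.isSelfAdjoint_iff_isSymmetric.mp hQTsa, fun x => ?_⟩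
    have : (Q * T) x = Q (T (Q x)) := by
      rw [← hQTQ]; rfl
    rw [ContinuousLinearMap.reApplyInnerSelf, this]
    have hip : ⟪Q (T (Q x)), x⟫ = ⟪T (Q x), Q x⟫ := by
      rw [← ContinuousLinearMap.adjoint_inner_right Q (T (Q x)) x,
        hQsa.adjoint_eq]
    simp only [RCLike.re_to_real, hip]
    exact hT.inner_nonneg_left (Q x)
  refine ⟨⟨hPJP, hPJP ▸ hPTpos⟩, ⟨hQJQ, by rw [hQJQ, neg_neg]; exact hQTpos⟩, ?_, ?_⟩
  · intro y hy
    have hPy : P y = y := hPfix y hy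
    have h1 : ⟪(P * J * P) y, y⟫ = ⟪J y, y⟫ := by
      show ⟪P (J (P y)), y⟫ = ⟪J y, y⟫
      rw [← ContinuousLinearMap.adjoint_inner_right P (J (P y)) y, hPsa.adjoint_eq, hPy]
    rw [← h1, hPJP]
    simpa using hPTpos.inner_nonneg_left y
  · intro z hz
    have hQz : Q z = z := hQfix z hz
    have : ⟪J z, z⟫ = -⟪(Q * T) z, z⟫ := by
      have h1 : ⟪(Q * J * Q) z, z⟫ = ⟪J z, z⟫ := by
        show ⟪Q (J (Q z)), z⟫ = ⟪J z, z⟫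
        rw [← ContinuousLinearMap.adjoint_inner_right Q (J (Q z)) z, hQsa.adjoint_eq, hQz]
      rw [← h1, hQJQ]
      simp
    rw [this]
    have := hQTpos.inner_nonneg_left z
    linarith
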